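/- In the prompt-tuned memory-augmented HMM with prompt π defined by π_{(m_{1:N},j,s)} = 1 if m_{j*} ∈ supp(b) and 0 otherwise, assume the relaxed multi-memory non-degeneracy condition and stationarity of P(H_0). Define Ĝ_i(x) = W v_i(x) where (v_i(x))_{(m,j,s)} = P(M_j = m, H_i = (j,s) | X̂_{−i} = x̂_{−i}) when P(X̂_{−i} = x̂_{−i}) > 0 and Ĝ_i(x) = 0 otherwise; let e(z) ∈ ℝ^{|𝕄||H|} with e(z)_{(m,j,s)} = W_{z,(m,j,s)}; and let Î(x) = {i+1 : i ∈ [T], supp(P(S_i | X_{−i} = x_{−i})) ⊆ S*, supp(P(J_i | X_{−i} = x_{−i})) ⊆ {j*}}. Then there exist Θ^{(V)} ∈ ℝ^{|𝕄||H|×|X|} and u ∈ ℝ^{|𝕄||H|} such that for every x ∈ X^T with P(X_{1:T} = x) > 0 and Î(x) nonempty, and every i ∈ Î(x): (i) if P(X̂_{−i} = x̂_{−i}) > 0 then u^T ((Θ^{(V)} Ĝ_i(x)) ⊙ e(x̂_i)) = b^T P(X̂_i = x̂_i, M_{j*} | X̂_{−i} = x̂_{−i}); (ii) in all cases u^T ((Θ^{(V)}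 Ĝ_i(x)) ⊙ e(x̂_i)) = r_{x,i} · b^T P(M_{j*} | X_{1:T} = x) for some scalar r_{x,i} > 0. Furthermore, if P(X̂ = x̂) = 0 then u^T ((Θ^{(V)} Ĝ_i(x)) ⊙ e(x̂_i)) = 0 for every i > 1. -/

import Mathlib

open scoped Classical
open Matrix
noncomputable section
def fwdVec {H : Type*} [Fintype H] (A : Matrix H H ℝ) :
    (H → ℝ) → List (H → ℝ) → (H → ℝ)
  | μ, [] => μ
  | μ, v :: vs => fwdVec A (A.mulVec fun h => μ h * v h) vs

section FwdHelpers
variable {H : Type*} [Fintype H]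

lemma fwdVec_nonneg (A : Matrix H H ℝ) (hA : ∀ g g', 0 ≤ A g g') :
    ∀ (l : List (H → ℝ)) (μ : H → ℝ), (∀ h, 0 ≤ μ h) →
      (∀ v ∈ l, ∀ h, 0 ≤ v h) → ∀ h, 0 ≤ fwdVec A μ l h
  | [], μ, hμ, _, h => hμ h
  | v :: l, μ, hμ, hl, h => by
      refine fwdVec_nonneg A hA l _ (fun h' => ?_)
        (fun w hw => hl w (List.mem_cons_of_mem _ hw)) h
      refine Finset.sum_nonneg fun h'' _ => ?_
      exact mul_nonneg (hA _ _) (mul_nonneg (hμ _) (hl v List.mem_cons_self _))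

lemma fwdVec_sum {ι : Type*} (A : Matrix H H ℝ) (t : Finset ι) :
    ∀ (l : List (H → ℝ)) (f : ι → H → ℝ) (h : H),
      fwdVec A (fun h => ∑ g ∈ t, f g h) l h = ∑ g ∈ t, fwdVec A (f g) l h
  | [], f, h => by simp [fwdVec]
  | v :: l, f, h => by
      show fwdVec A (A.mulVec fun h => (∑ g ∈ t, f g h) * v h) l h = _
      have h1 : (A.mulVec fun h => (∑ g ∈ t, f g h) * v h)
          = fun h' => ∑ g ∈ t, (A.mulVec fun h'' => f g h'' * v h'') h' := by
        funext h'
        simp only [Matrix.mulVec, dotProduct, Finset.sum_mul, Finset.mul_sum]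
        rw [Finset.sum_comm]
      rw [h1, fwdVec_sum A t l]
      rfl

lemma fwdVec_smul (A : Matrix H H ℝ) (c : ℝ) :
    ∀ (l : List (H → ℝ)) (μ : H → ℝ) (h : H),
      fwdVec A (fun h => c * μ h) l h = c * fwdVec A μ l h
  | [], μ, h => rfl
  | v :: l, μ, h => by
      show fwdVec A (A.mulVec fun h => (c * μ h) * v h) l h = _
      have h1 : (A.mulVec fun h => (c * μ h) * v h)
          = fun h' => c * (A.mulVec fun h'' => μ h'' * v h'') h' := by
        funext h'
        simp only [Matrix.mulVec, dotProduct, Finset.mul_sum]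
        exact Finset.sum_congr rfl fun h'' _ => by ring
      rw [h1, fwdVec_smul A c l]
      rfl

lemma fwdVec_const_head (A : Matrix H H ℝ) (c : ℝ) (μ : H → ℝ) (l : List (H → ℝ)) (h : H) :
    fwdVec A μ ((fun _ => c) :: l) h = c * fwdVec A (A.mulVec μ) l h := by
  show fwdVec A (A.mulVec fun h => μ h * c) l h = _
  have h1 : (A.mulVec fun h => μ h * c) = fun h' => c * (A.mulVec μ) h' := by
    funext h'
    simp only [Matrix.mulVec, dotProduct, Finset.mul_sum]
    exact Finset.sum_congr rfl fun h'' _ => by ring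
  rw [h1, fwdVec_smul]

lemma fwdVec_slot [DecidableEq H] (A : Matrix H H ℝ) :
    ∀ (n : ℕ) (E : Fin n → H → ℝ) (i : Fin n) (μ : H → ℝ) (h : H),
      fwdVec A μ (List.ofFn E) h
        = ∑ g, E i g * fwdVec A μ
            (List.ofFn fun k => if k = i then (fun h' => if h' = g then 1 else 0) else E k) h
  | 0, E, i, μ, h => i.elim0
  | n + 1, E, i, μ, h => by
      induction i using Fin.cases with
      | zero =>
          have hlist : ∀ g : H,
              (List.ofFn fun k : Fin (n+1) =>
                if k = 0 then (fun h' => if h' = g then (1:ℝ) else 0) else E k)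
              = (fun h' => if h' = g then (1:ℝ) else 0) ::
                  List.ofFn (fun k : Fin n => E k.succ) := by
            intro g
            rw [List.ofFn_succ]
            refine List.cons_eq_cons.mpr ⟨if_pos rfl, ?_⟩
            exact congrArg List.ofFn (funext fun k => if_neg (Fin.succ_ne_zero k))
          rw [List.ofFn_succ]
          show fwdVec A (A.mulVec fun h => μ h * E 0 h) (List.ofFn fun k => E k.succ) h = _
          have h2 : (A.mulVec fun h => μ h * E 0 h)
              = fun h' => ∑ g, E 0 g *
                  (A.mulVec fun h'' => μ h'' * (if h'' = g then 1 else 0)) h' := by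
            funext h'
            simp only [Matrix.mulVec, dotProduct, Finset.mul_sum]
            rw [Finset.sum_comm]
            refine Finset.sum_congr rfl fun h'' _ => ?_
            simp only [mul_ite, mul_one, mul_zero]
            rw [Finset.sum_ite_eq]
            simp only [Finset.mem_univ, if_true]
            ring
          rw [h2, fwdVec_sum]
          refine Finset.sum_congr rfl fun g _ => ?_
          rw [fwdVec_smul, hlist g]
          rfl
      | succ j =>
          have hlist : ∀ g : H,
              (List.ofFn fun k : Fin (n+1) =>
                if k = j.succ then (fun h' => if h' = g then (1:ℝ) else 0) else E k)
              = E 0 :: List.ofFn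
                  (fun k : Fin n => if k = j then (fun h' => if h' = g then (1:ℝ) else 0)
                    else E k.succ) := by
            intro g
            rw [List.ofFn_succ]
            refine List.cons_eq_cons.mpr ⟨if_neg (Ne.symm (Fin.succ_ne_zero j)), ?_⟩
            exact congrArg List.ofFn (funext fun k => by simp only [Fin.succ_inj])
          rw [List.ofFn_succ]
          show fwdVec A (A.mulVec fun h => μ h * E 0 h) (List.ofFn fun k => E k.succ) h = _
          rw [fwdVec_slot A n (fun k => E k.succ) j]
          refine Finset.sum_congr rfl fun g _ => ?_
          rw [hlist g]
          rfl

end FwdHelpers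
/-- `mJointAt A μ W m x i g = P(H_i = g, X_{−i} = x_{−i} | M = m)` in a
memory-augmented HMM (hidden chain `H_1, …, H_T`, `P(H_1) = A μ`). -/
def mJointAt {𝕄 S X : Type*} {N T : ℕ} [Fintype S] [DecidableEq S]
    (A : Matrix (Fin N × S) (Fin N × S) ℝ) (μ : Fin N × S → ℝ)
    (W : X → 𝕄 → Fin N × S → ℝ) (m : Fin N → 𝕄)
    (x : Fin T → X) (i : Fin T) (g : Fin N × S) : ℝ :=
  ∑ h, fwdVec A (A.mulVec μ)
    (List.ofFn fun k : Fin T =>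
      if k = i then (fun g' => if g' = g then 1 else 0)
      else fun g' => W (x k) (m g'.1) g') h

/-- `mZ … x i = P(X_{−i} = x_{−i})`. -/
def mZ {𝕄 S X : Type*} {N T : ℕ} [Fintype 𝕄] [Fintype S] [DecidableEq S]
    (pM : (Fin N → 𝕄) → ℝ) (A : Matrix (Fin N × S) (Fin N × S) ℝ)
    (μ : Fin N × S → ℝ) (W : X → 𝕄 → Fin N × S → ℝ)
    (x : Fin T → X) (i : Fin T) : ℝ :=
  ∑ m, pM m * ∑ g, mJointAt A μ W m x i g

/-- `mSeqPm … m x = P(X_{1:T} = x | M = m)`. -/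
def mSeqPm {𝕄 S X : Type*} {N T : ℕ} [Fintype S]
    (A : Matrix (Fin N × S) (Fin N × S) ℝ) (μ : Fin N × S → ℝ)
    (W : X → 𝕄 → Fin N × S → ℝ) (m : Fin N → 𝕄) (x : Fin T → X) : ℝ :=
  ∑ h, fwdVec A (A.mulVec μ)
    (List.ofFn fun k : Fin T => fun g' => W (x k) (m g'.1) g') h

/-- `mSeqP … x = P(X_{1:T} = x)`. -/
def mSeqP {𝕄 S X : Type*} {N T : ℕ} [Fintype 𝕄] [Fintype S]
    (pM : (Fin N → 𝕄) → ℝ) (A : Matrix (Fin N × S) (Fin N × S) ℝ)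
    (μ : Fin N × S → ℝ) (W : X → 𝕄 → Fin N × S → ℝ) (x : Fin T → X) : ℝ :=
  ∑ m, pM m * mSeqPm A μ W m x

/-- `mGtok … x i z = P(X_i = z | X_{−i} = x_{−i})`, the pretrained model
output `G_i(x)` at position `i`. -/
def mGtok {𝕄 S X : Type*} {N T : ℕ} [Fintype 𝕄] [Fintype S] [DecidableEq S]
    (pM : (Fin N → 𝕄) → ℝ) (A : Matrix (Fin N × S) (Fin N × S) ℝ)
    (μ : Fin N × S → ℝ) (W : X → 𝕄 → Fin N × S → ℝ)
    (x : Fin T → X) (i : Fin T) (z : X) : ℝ :=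
  (∑ m, pM m * ∑ g, mJointAt A μ W m x i g * W z (m g.1) g) / mZ pM A μ W x i

/-- `mPostH … x i g = P(H_i = g | X_{−i} = x_{−i})`. -/
def mPostH {𝕄 S X : Type*} {N T : ℕ} [Fintype 𝕄] [Fintype S] [DecidableEq S]
    (pM : (Fin N → 𝕄) → ℝ) (A : Matrix (Fin N × S) (Fin N × S) ℝ)
    (μ : Fin N × S → ℝ) (W : X → 𝕄 → Fin N × S → ℝ)
    (x : Fin T → X) (i : Fin T) (g : Fin N × S) : ℝ :=
  (∑ m, pM m * mJointAt A μ W m x i g) / mZ pM A μ W x i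

/-- The 0/1 prompt of the paper: `π_{(m_{1:N},j,s)} = 1` if `m_{j*} ∈ supp(b)`
and `0` otherwise (it does not depend on `(j,s)`). -/
def promptV {𝕄 : Type*} {N : ℕ} (b : 𝕄 → ℝ) (jstar : Fin N)
    (m : Fin N → 𝕄) : ℝ :=
  if b (m jstar) ≠ 0 then 1 else 0

/-- Conditioned on `M = m`, the emission-likelihood vector at position `k`
(0-indexed) of the modified sequence `x̂ = (z̃, x_1, …, x_T)`:
at position `0` the fake token `z̃` has likelihood `π_{(m,j,s)}`, and at
position `k ≥ 1` the token `x_k` has likelihood `W (x_k) (m j) (j,s)`. -/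
def hatEm {𝕄 S X : Type*} {N T : ℕ} (W : X → 𝕄 → Fin N × S → ℝ)
    (b : 𝕄 → ℝ) (jstar : Fin N) (m : Fin N → 𝕄) (x : Fin T → X)
    (k : Fin (T + 1)) : Fin N × S → ℝ :=
  if hk : (k : ℕ) = 0 then fun _ => promptV b jstar m
  else fun g => W (x ⟨(k : ℕ) - 1, by have := k.isLt; omega⟩) (m g.1) g

/-- `hatJointAt … m x i g = P(H_i = g, X̂_{−i} = x̂_{−i} | M = m)` for the
modified sequence `X̂` of length `T+1` (hidden chain `H_1, …, H_{T+1}`,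
`P(H_1) = A μ`). -/
def hatJointAt {𝕄 S X : Type*} {N T : ℕ} [Fintype S] [DecidableEq S]
    (A : Matrix (Fin N × S) (Fin N × S) ℝ) (μ : Fin N × S → ℝ)
    (W : X → 𝕄 → Fin N × S → ℝ) (b : 𝕄 → ℝ) (jstar : Fin N)
    (m : Fin N → 𝕄) (x : Fin T → X) (i : Fin (T + 1)) (g : Fin N × S) : ℝ :=
  ∑ h, fwdVec A (A.mulVec μ)
    (List.ofFn fun k : Fin (T + 1) =>
      if k = i then (fun g' => if g' = g then 1 else 0)
      else hatEm W b jstar m x k) h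

/-- `hatZ … x i = P(X̂_{−i} = x̂_{−i})`. -/
def hatZ {𝕄 S X : Type*} {N T : ℕ} [Fintype 𝕄] [Fintype S] [DecidableEq S]
    (pM : (Fin N → 𝕄) → ℝ) (A : Matrix (Fin N × S) (Fin N × S) ℝ)
    (μ : Fin N × S → ℝ) (W : X → 𝕄 → Fin N × S → ℝ) (b : 𝕄 → ℝ)
    (jstar : Fin N) (x : Fin T → X) (i : Fin (T + 1)) : ℝ :=
  ∑ m, pM m * ∑ g, hatJointAt A μ W b jstar m x i g

/-- `hatSeqPm … m x = P(X̂ = x̂ | M = m)`. -/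
def hatSeqPm {𝕄 S X : Type*} {N T : ℕ} [Fintype S]
    (A : Matrix (Fin N × S) (Fin N × S) ℝ) (μ : Fin N × S → ℝ)
    (W : X → 𝕄 → Fin N × S → ℝ) (b : 𝕄 → ℝ) (jstar : Fin N)
    (m : Fin N → 𝕄) (x : Fin T → X) : ℝ :=
  ∑ h, fwdVec A (A.mulVec μ) (List.ofFn (hatEm W b jstar m x)) h

/-- `hatSeqP … x = P(X̂ = x̂)`. -/
def hatSeqP {𝕄 S X : Type*} {N T : ℕ} [Fintype 𝕄] [Fintype S]
    (pM : (Fin N → 𝕄) → ℝ) (A : Matrix (Fin N × S) (Fin N × S) ℝ)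
    (μ : Fin N × S → ℝ) (W : X → 𝕄 → Fin N × S → ℝ) (b : 𝕄 → ℝ)
    (jstar : Fin N) (x : Fin T → X) : ℝ :=
  ∑ m, pM m * hatSeqPm A μ W b jstar m x

/-- `hatGvec … x i z = (W v_i(x)) z` where
`(v_i(x))_{(m,j,s)} = P(M_j = m, H_i = (j,s) | X̂_{−i} = x̂_{−i})`:
the model output `Ĝ_i(x)` on the prompted input. -/
def hatGvec {𝕄 S X : Type*} {N T : ℕ} [Fintype 𝕄] [Fintype S] [Fintype X]
    [DecidableEq 𝕄] [DecidableEq S]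
    (pM : (Fin N → 𝕄) → ℝ) (A : Matrix (Fin N × S) (Fin N × S) ℝ)
    (μ : Fin N × S → ℝ) (W : X → 𝕄 → Fin N × S → ℝ) (b : 𝕄 → ℝ)
    (jstar : Fin N) (x : Fin T → X) (i : Fin (T + 1)) (z : X) : ℝ :=
  ∑ p : 𝕄 × (Fin N × S), W z p.1 p.2 *
    ((∑ m, if m p.2.1 = p.1 then pM m * hatJointAt A μ W b jstar m x i p.2 else 0)
      / hatZ pM A μ W b jstar x i)

/-- `hatGtot` is `Ĝ_i(x)` with the convention `Ĝ_i(x) = 0` when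
`P(X̂_{−i} = x̂_{−i}) = 0`. -/
def hatGtot {𝕄 S X : Type*} {N T : ℕ} [Fintype 𝕄] [Fintype S] [Fintype X]
    [DecidableEq 𝕄] [DecidableEq S]
    (pM : (Fin N → 𝕄) → ℝ) (A : Matrix (Fin N × S) (Fin N × S) ℝ)
    (μ : Fin N × S → ℝ) (W : X → 𝕄 → Fin N × S → ℝ) (b : 𝕄 → ℝ)
    (jstar : Fin N) (x : Fin T → X) (i : Fin (T + 1)) (z : X) : ℝ :=
  if 0 < hatZ pM A μ W b jstar x i then hatGvec pM A μ W b jstar x i z else 0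


section ModelHelpers
variable {𝕄 S X : Type*} {N T : ℕ} [Fintype 𝕄] [Fintype S] [Fintype X]
  [DecidableEq 𝕄] [DecidableEq S]
variable (A : Matrix (Fin N × S) (Fin N × S) ℝ) (μ : Fin N × S → ℝ)
  (W : X → 𝕄 → Fin N × S → ℝ) (b : 𝕄 → ℝ) (jstar : Fin N)

lemma promptV_nonneg (m : Fin N → 𝕄) : 0 ≤ promptV b jstar m := by
  unfold promptV; split <;> norm_num

lemma promptV_mul_b (m : Fin N → 𝕄) : b (m jstar) * promptV b jstar m = b (m jstar) := by
  unfold promptV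
  by_cases hb : b (m jstar) = 0 <;> simp [hb]

lemma mulVec_init_nonneg (hμ0 : ∀ g, 0 ≤ μ g) (hA0 : ∀ g g', 0 ≤ A g' g) :
    ∀ h, 0 ≤ A.mulVec μ h := fun h =>
  Finset.sum_nonneg fun g _ => mul_nonneg (hA0 _ _) (hμ0 _)

lemma mJointAt_nonneg (hμ0 : ∀ g, 0 ≤ μ g) (hA0 : ∀ g g', 0 ≤ A g' g)
    (hW0 : ∀ z m0 g, 0 ≤ W z m0 g) (m : Fin N → 𝕄) (x : Fin T → X) (i : Fin T) (g : Fin N × S) :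
    0 ≤ mJointAt A μ W m x i g := by
  refine Finset.sum_nonneg fun h _ => ?_
  refine fwdVec_nonneg A (fun a a' => hA0 a' a) _ _ (mulVec_init_nonneg A μ hμ0 hA0) ?_ h
  intro v hv h'
  rw [List.mem_ofFn] at hv
  obtain ⟨k, rfl⟩ := hv
  split
  · dsimp only; split <;> norm_num
  · exact hW0 _ _ _

lemma mSeqPm_nonneg (hμ0 : ∀ g, 0 ≤ μ g) (hA0 : ∀ g g', 0 ≤ A g' g)
    (hW0 : ∀ z m0 g, 0 ≤ W z m0 g) (m : Fin N → 𝕄) (x : Fin T → X) : 0 ≤ mSeqPm A μ W m x := by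
  refine Finset.sum_nonneg fun h _ => ?_
  refine fwdVec_nonneg A (fun a a' => hA0 a' a) _ _ (mulVec_init_nonneg A μ hμ0 hA0) ?_ h
  intro v hv h'
  rw [List.mem_ofFn] at hv
  obtain ⟨k, rfl⟩ := hv
  exact hW0 _ _ _

lemma mSeqPm_eq (m : Fin N → 𝕄) (x : Fin T → X) (i : Fin T) :
    mSeqPm A μ W m x = ∑ g, mJointAt A μ W m x i g * W (x i) (m g.1) g := by
  unfold mSeqPm mJointAt
  rw [show (∑ h, fwdVec A (A.mulVec μ)
      (List.ofFn fun k : Fin T => fun g' => W (x k) (m g'.1) g') h)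
    = ∑ h, ∑ g, W (x i) (m g.1) g * fwdVec A (A.mulVec μ)
        (List.ofFn fun k : Fin T =>
          if k = i then (fun g' => if g' = g then 1 else 0)
          else fun g' => W (x k) (m g'.1) g') h from
    Finset.sum_congr rfl fun h _ =>
      fwdVec_slot A T (fun k => fun g' => W (x k) (m g'.1) g') i (A.mulVec μ) h]
  rw [Finset.sum_comm]
  refine Finset.sum_congr rfl fun g _ => ?_
  rw [Finset.sum_mul]
  exact Finset.sum_congr rfl fun h _ => mul_comm _ _

lemma W_le_one (hW0 : ∀ z m0 g, 0 ≤ W z m0 g) (hW1 : ∀ m0 g, ∑ z, W z m0 g = 1) (z : X) (m0 : 𝕄) (g : Fin N × S) :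
    W z m0 g ≤ 1 := by
  rw [← hW1 m0 g]
  exact Finset.single_le_sum (fun z' _ => hW0 z' m0 g) (Finset.mem_univ z)

lemma mSeqPm_le (hμ0 : ∀ g, 0 ≤ μ g) (hA0 : ∀ g g', 0 ≤ A g' g)
    (hW0 : ∀ z m0 g, 0 ≤ W z m0 g) (hW1 : ∀ m0 g, ∑ z, W z m0 g = 1)
    (m : Fin N → 𝕄) (x : Fin T → X) (i : Fin T) :
    mSeqPm A μ W m x ≤ ∑ g, mJointAt A μ W m x i g := by
  rw [mSeqPm_eq A μ W m x i]
  refine Finset.sum_le_sum fun g _ => ?_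
  calc mJointAt A μ W m x i g * W (x i) (m g.1) g
      ≤ mJointAt A μ W m x i g * 1 :=
        mul_le_mul_of_nonneg_left (W_le_one W hW0 hW1 _ _ _)
          (mJointAt_nonneg A μ W hμ0 hA0 hW0 m x i g)
    _ = mJointAt A μ W m x i g := mul_one _

lemma hatJointAt_succ (hstat : A.mulVec μ = μ)
    (m : Fin N → 𝕄) (x : Fin T → X) (i : Fin T) (g : Fin N × S) :
    hatJointAt A μ W b jstar m x i.succ g
      = promptV b jstar m * mJointAt A μ W m x i g := by
  unfold hatJointAt mJointAt
  rw [Finset.mul_sum]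
  refine Finset.sum_congr rfl fun h _ => ?_
  have hlist : (List.ofFn fun k : Fin (T + 1) =>
      if k = i.succ then (fun g' => if g' = g then (1:ℝ) else 0)
      else hatEm W b jstar m x k)
    = (fun _ => promptV b jstar m) ::
      (List.ofFn fun k : Fin T =>
        if k = i then (fun g' => if g' = g then (1:ℝ) else 0)
        else fun g' => W (x k) (m g'.1) g') := by
    rw [List.ofFn_succ]
    refine List.cons_eq_cons.mpr ⟨?_, ?_⟩
    · rw [if_neg (Ne.symm (Fin.succ_ne_zero i))]
      simp [hatEm]
    · refine congrArg List.ofFn (funext fun k => ?_)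
      simp only [Fin.succ_inj]
      by_cases hk : k = i
      · rw [if_pos hk, if_pos hk]
      · rw [if_neg hk, if_neg hk]
        unfold hatEm
        have hne : ((k.succ : Fin (T+1)) : ℕ) ≠ 0 := by
          simp [Fin.val_succ]
        rw [dif_neg hne]
        have hmk : ∀ (hh : ((k.succ : Fin (T+1)) : ℕ) - 1 < T),
            (⟨((k.succ : Fin (T+1)) : ℕ) - 1, hh⟩ : Fin T) = k := by
          intro hh
          ext
          simp [Fin.val_succ]
        simp only [hmk]
  rw [hlist, fwdVec_const_head,
    show A.mulVec (A.mulVec μ) = A.mulVec μ from congrArg A.mulVec hstat]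

lemma hatSeqPm_eq (hstat : A.mulVec μ = μ) (m : Fin N → 𝕄) (x : Fin T → X) :
    hatSeqPm A μ W b jstar m x = promptV b jstar m * mSeqPm A μ W m x := by
  unfold hatSeqPm mSeqPm
  rw [Finset.mul_sum]
  refine Finset.sum_congr rfl fun h _ => ?_
  have hlist : List.ofFn (hatEm W b jstar m x)
    = (fun _ => promptV b jstar m) ::
      (List.ofFn fun k : Fin T => fun g' => W (x k) (m g'.1) g') := by
    rw [List.ofFn_succ]
    refine List.cons_eq_cons.mpr ⟨?_, ?_⟩
    · simp [hatEm]
    · refine congrArg List.ofFn (funext fun k => ?_)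
      unfold hatEm
      have hne : ((k.succ : Fin (T+1)) : ℕ) ≠ 0 := by simp [Fin.val_succ]
      rw [dif_neg hne]
      have hmk : ∀ (hh : ((k.succ : Fin (T+1)) : ℕ) - 1 < T),
          (⟨((k.succ : Fin (T+1)) : ℕ) - 1, hh⟩ : Fin T) = k := by
        intro hh
        ext
        simp [Fin.val_succ]
      simp only [hmk]
  rw [hlist, fwdVec_const_head,
    show A.mulVec (A.mulVec μ) = A.mulVec μ from congrArg A.mulVec hstat]

end ModelHelpers

lemma exists_dual {𝕄 S X : Type*} {N : ℕ} [Fintype X] [DecidableEq 𝕄] [DecidableEq S]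
    (W : X → 𝕄 → Fin N × S → ℝ) (b : 𝕄 → ℝ) (jstar : Fin N) (Sstar : Finset S)
    (hli : LinearIndependent ℝ
      (fun p : {m0 : 𝕄 // b m0 ≠ 0} × {s : S // s ∈ Sstar} =>
        fun z : X => W z p.1.1 (jstar, p.2.1)))
    (hspan : Submodule.span ℝ
        {f : X → ℝ | ∃ m0 : 𝕄, ∃ s : S,
          b m0 ≠ 0 ∧ s ∈ Sstar ∧ f = fun z => W z m0 (jstar, s)}
      ⊓ Submodule.span ℝ
        {f : X → ℝ |
          (∃ m0 : 𝕄, ∃ s : S,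
            b m0 ≠ 0 ∧ s ∉ Sstar ∧ f = fun z => W z m0 (jstar, s))
          ∨ (∃ m0 : 𝕄, ∃ j : Fin N, ∃ s : S,
            j ≠ jstar ∧ f = fun z => W z m0 (j, s))}
      = ⊥) :
    ∃ φ : {m0 : 𝕄 // b m0 ≠ 0} × {s : S // s ∈ Sstar} → ((X → ℝ) →ₗ[ℝ] ℝ),
      (∀ p q : {m0 : 𝕄 // b m0 ≠ 0} × {s : S // s ∈ Sstar},
        φ p (fun z => W z q.1.1 (jstar, q.2.1)) = if q = p then 1 else 0) ∧
      (∀ p, ∀ m0 : 𝕄, ∀ s : S, b m0 ≠ 0 → s ∉ Sstar →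
        φ p (fun z => W z m0 (jstar, s)) = 0) ∧
      (∀ p, ∀ m0 : 𝕄, ∀ j : Fin N, ∀ s : S, j ≠ jstar →
        φ p (fun z => W z m0 (j, s)) = 0) := by
  classical
  set Vbar : Submodule ℝ (X → ℝ) := Submodule.span ℝ
    {f : X → ℝ |
      (∃ m0 : 𝕄, ∃ s : S, b m0 ≠ 0 ∧ s ∉ Sstar ∧ f = fun z => W z m0 (jstar, s))
      ∨ (∃ m0 : 𝕄, ∃ j : Fin N, ∃ s : S, j ≠ jstar ∧ f = fun z => W z m0 (j, s))}
    with hVbar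
  set w : {m0 : 𝕄 // b m0 ≠ 0} × {s : S // s ∈ Sstar} → (X → ℝ) :=
    fun p => fun z => W z p.1.1 (jstar, p.2.1) with hw
  have hrange : Set.range w
      = {f : X → ℝ | ∃ m0 : 𝕄, ∃ s : S,
          b m0 ≠ 0 ∧ s ∈ Sstar ∧ f = fun z => W z m0 (jstar, s)} := by
    ext f
    constructor
    · rintro ⟨⟨⟨m0, hm0⟩, ⟨s, hs⟩⟩, rfl⟩
      exact ⟨m0, s, hm0, hs, rfl⟩
    · rintro ⟨m0, s, hm0, hs, rfl⟩
      exact ⟨⟨⟨m0, hm0⟩, ⟨s, hs⟩⟩, rfl⟩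
  have hdisj : Disjoint (Submodule.span ℝ (Set.range w)) (LinearMap.ker Vbar.mkQ) := by
    rw [Submodule.ker_mkQ, hrange, disjoint_iff]
    exact hspan
  have hli2 : LinearIndependent ℝ (Vbar.mkQ ∘ w) := hli.map hdisj
  set Bs := Module.Basis.span hli2 with hBs
  obtain ⟨U', hcompl⟩ :=
    Submodule.exists_isCompl (Submodule.span ℝ (Set.range (Vbar.mkQ ∘ w)))
  set proj := Submodule.linearProjOfIsCompl _ _ hcompl with hproj
  refine ⟨fun p => ((Bs.coord p).comp proj).comp Vbar.mkQ, ?_, ?_, ?_⟩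
  · intro p q
    have hmem : Vbar.mkQ (w q) ∈ Submodule.span ℝ (Set.range (Vbar.mkQ ∘ w)) :=
      Submodule.subset_span ⟨q, rfl⟩
    have hproj_eq : proj (Vbar.mkQ (w q)) = ⟨Vbar.mkQ (w q), hmem⟩ :=
      Submodule.linearProjOfIsCompl_apply_left hcompl ⟨Vbar.mkQ (w q), hmem⟩
    have hBq : (⟨Vbar.mkQ (w q), hmem⟩ :
        Submodule.span ℝ (Set.range (Vbar.mkQ ∘ w))) = Bs q := by
      apply Subtype.ext
      rw [hBs, Module.Basis.span_apply]
      rfl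
    show Bs.coord p (proj (Vbar.mkQ (w q))) = _
    rw [hproj_eq, hBq, Module.Basis.coord_apply, Module.Basis.repr_self, Finsupp.single_apply]
  · intro p m0 s hm0 hs
    have hmem : (fun z => W z m0 (jstar, s)) ∈ Vbar :=
      Submodule.subset_span (Or.inl ⟨m0, s, hm0, hs, rfl⟩)
    have h0 : Vbar.mkQ (fun z => W z m0 (jstar, s)) = 0 :=
      (Submodule.Quotient.mk_eq_zero Vbar).mpr hmem
    show Bs.coord p (proj (Vbar.mkQ _)) = 0
    rw [h0, map_zero, map_zero]
  · intro p m0 j s hj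
    have hmem : (fun z => W z m0 (j, s)) ∈ Vbar :=
      Submodule.subset_span (Or.inr ⟨m0, j, s, hj, rfl⟩)
    have h0 : Vbar.mkQ (fun z => W z m0 (j, s)) = 0 :=
      (Submodule.Quotient.mk_eq_zero Vbar).mpr hmem
    show Bs.coord p (proj (Vbar.mkQ _)) = 0
    rw [h0, map_zero, map_zero]

/-- The prompt-tuned value matrix built from the dual functionals. -/
def thetaV {𝕄 S X : Type*} {N : ℕ} [Fintype X]
    (b : 𝕄 → ℝ) (jstar : Fin N) (Sstar : Finset S)
    (φ : {m0 : 𝕄 // b m0 ≠ 0} × {s : S // s ∈ Sstar} → ((X → ℝ) →ₗ[ℝ] ℝ)) :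
    Matrix (𝕄 × (Fin N × S)) X ℝ := fun p z =>
  if hc : b p.1 ≠ 0 ∧ p.2.1 = jstar ∧ p.2.2 ∈ Sstar then
    φ ⟨⟨p.1, hc.1⟩, ⟨p.2.2, hc.2.2⟩⟩ (fun z' => if z' = z then 1 else 0)
  else 0

lemma dual_apply_sum {X : Type*} [Fintype X] [DecidableEq X]
    (ψ : (X → ℝ) →ₗ[ℝ] ℝ) (f : X → ℝ) :
    ψ f = ∑ z, ψ (fun z' => if z' = z then 1 else 0) * f z := by
  have hf : f = ∑ z, f z • (fun z' => if z' = z then (1:ℝ) else 0) := by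
    funext z'
    rw [Finset.sum_apply]
    simp only [Pi.smul_apply, smul_eq_mul, mul_ite, mul_one, mul_zero]
    rw [Finset.sum_ite_eq]
    simp
  conv_lhs => rw [hf]
  rw [map_sum]
  exact Finset.sum_congr rfl fun z _ => by rw [LinearMap.map_smul, smul_eq_mul, mul_comm]

lemma thetaV_mulVec {𝕄 S X : Type*} {N T : ℕ} [Fintype 𝕄] [Fintype S] [Fintype X]
    [DecidableEq 𝕄] [DecidableEq S]
    (pM : (Fin N → 𝕄) → ℝ) (A : Matrix (Fin N × S) (Fin N × S) ℝ)
    (μ : Fin N × S → ℝ) (W : X → 𝕄 → Fin N × S → ℝ) (b : 𝕄 → ℝ)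
    (jstar : Fin N) (Sstar : Finset S)
    (φ : {m0 : 𝕄 // b m0 ≠ 0} × {s : S // s ∈ Sstar} → ((X → ℝ) →ₗ[ℝ] ℝ))
    (hφ1 : ∀ p q : {m0 : 𝕄 // b m0 ≠ 0} × {s : S // s ∈ Sstar},
      φ p (fun z => W z q.1.1 (jstar, q.2.1)) = if q = p then 1 else 0)
    (hφ2 : ∀ p, ∀ m0 : 𝕄, ∀ s : S, b m0 ≠ 0 → s ∉ Sstar →
      φ p (fun z => W z m0 (jstar, s)) = 0)
    (hφ3 : ∀ p, ∀ m0 : 𝕄, ∀ j : Fin N, ∀ s : S, j ≠ jstar →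
      φ p (fun z => W z m0 (j, s)) = 0)
    (hstat : A.mulVec μ = μ)
    (x : Fin T → X) (i0 : Fin T)
    (hZ : 0 < hatZ pM A μ W b jstar x i0.succ) (p : 𝕄 × (Fin N × S)) :
    (thetaV b jstar Sstar φ).mulVec (hatGtot pM A μ W b jstar x i0.succ) p
      = if b p.1 ≠ 0 ∧ p.2.1 = jstar ∧ p.2.2 ∈ Sstar then
          (∑ m, if m jstar = p.1 then
              pM m * (promptV b jstar m * mJointAt A μ W m x i0 p.2) else 0)
            / hatZ pM A μ W b jstar x i0.succ
        else 0 := by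
  classical
  have hGt : hatGtot pM A μ W b jstar x i0.succ = hatGvec pM A μ W b jstar x i0.succ :=
    funext fun z => if_pos hZ
  -- general facts about the dual functionals
  have hcol1 : ∀ pp : {m0 : 𝕄 // b m0 ≠ 0} × {s : S // s ∈ Sstar},
      ∀ (m0 : 𝕄) (g : Fin N × S), m0 = pp.1.1 → g = (jstar, pp.2.1) →
        φ pp (fun z => W z m0 g) = 1 := by
    intro pp m0 g h1 h2
    rw [h1, h2]
    have h := hφ1 pp pp
    rw [if_pos rfl] at h
    exact h
  have hcol0 : ∀ pp qq : {m0 : 𝕄 // b m0 ≠ 0} × {s : S // s ∈ Sstar}, qq ≠ pp →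
      ∀ (m0 : 𝕄) (g : Fin N × S), m0 = qq.1.1 → g = (jstar, qq.2.1) →
        φ pp (fun z => W z m0 g) = 0 := by
    intro pp qq hne m0 g h1 h2
    rw [h1, h2]
    have h := hφ1 pp qq
    rw [if_neg hne] at h
    exact h
  show ∑ z, thetaV b jstar Sstar φ p z * hatGtot pM A μ W b jstar x i0.succ z = _
  by_cases hc : b p.1 ≠ 0 ∧ p.2.1 = jstar ∧ p.2.2 ∈ Sstar
  · rw [if_pos hc]
    have hrow : ∀ z, thetaV b jstar Sstar φ p z
        = φ ⟨⟨p.1, hc.1⟩, ⟨p.2.2, hc.2.2⟩⟩ (fun z' => if z' = z then 1 else 0) := fun z => by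
      rw [thetaV, dif_pos hc]
    calc ∑ z, thetaV b jstar Sstar φ p z * hatGtot pM A μ W b jstar x i0.succ z
        = φ ⟨⟨p.1, hc.1⟩, ⟨p.2.2, hc.2.2⟩⟩ (hatGvec pM A μ W b jstar x i0.succ) := by
          rw [dual_apply_sum, hGt]
          exact Finset.sum_congr rfl fun z _ => by rw [hrow]
      _ = _ := ?_
    have hfun : hatGvec pM A μ W b jstar x i0.succ
        = ∑ q : 𝕄 × (Fin N × S),
            ((∑ m, if m q.2.1 = q.1 then
                pM m * hatJointAt A μ W b jstar m x i0.succ q.2 else 0)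
              / hatZ pM A μ W b jstar x i0.succ) • (fun z => W z q.1 q.2) := by
      funext z
      rw [Finset.sum_apply]
      unfold hatGvec
      exact Finset.sum_congr rfl fun q _ => by
        simp only [Pi.smul_apply, smul_eq_mul]; ring
    rw [hfun, map_sum]
    simp only [LinearMap.map_smul, smul_eq_mul]
    have hmain : ∀ q : 𝕄 × (Fin N × S), q ≠ p →
        ((∑ m, if m q.2.1 = q.1 then
            pM m * hatJointAt A μ W b jstar m x i0.succ q.2 else 0)
          / hatZ pM A μ W b jstar x i0.succ) *
          φ ⟨⟨p.1, hc.1⟩, ⟨p.2.2, hc.2.2⟩⟩ (fun z => W z q.1 q.2) = 0 := by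
      intro q hq
      by_cases hj : q.2.1 = jstar
      · by_cases hb : b q.1 = 0
        · have hv : (∑ m, if m q.2.1 = q.1 then
              pM m * hatJointAt A μ W b jstar m x i0.succ q.2 else 0) = 0 := by
            refine Finset.sum_eq_zero fun m _ => ?_
            by_cases hm : m q.2.1 = q.1
            · rw [if_pos hm, hatJointAt_succ A μ W b jstar hstat]
              have hπ : promptV b jstar m = 0 := by
                unfold promptV
                rw [if_neg]
                simp only [ne_eq, not_not]
                rw [← hj, hm, hb]
              rw [hπ, zero_mul, mul_zero]
            · rw [if_neg hm]
          rw [hv, zero_div, zero_mul]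
        · by_cases hs : q.2.2 ∈ Sstar
          · have hne : (⟨⟨q.1, hb⟩, ⟨q.2.2, hs⟩⟩ :
                {m0 : 𝕄 // b m0 ≠ 0} × {s : S // s ∈ Sstar})
                ≠ ⟨⟨p.1, hc.1⟩, ⟨p.2.2, hc.2.2⟩⟩ := by
              intro hqq
              apply hq
              have h1 : q.1 = p.1 := congrArg (fun r => r.1.1) hqq
              have h2 : q.2.2 = p.2.2 := congrArg (fun r => r.2.1) hqq
              refine Prod.ext h1 ?_
              have hq2 : q.2 = (jstar, q.2.2) := Prod.ext hj rfl
              rw [hq2, h2]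
              exact (Prod.ext hc.2.1 rfl : p.2 = (jstar, p.2.2)).symm
            rw [hcol0 _ _ hne q.1 q.2 rfl (Prod.ext hj rfl), mul_zero]
          · have hq2 : q.2 = (jstar, q.2.2) := Prod.ext hj rfl
            have hval : φ ⟨⟨p.1, hc.1⟩, ⟨p.2.2, hc.2.2⟩⟩ (fun z => W z q.1 q.2) = 0 := by
              rw [hq2]
              exact hφ2 _ q.1 q.2.2 hb hs
            rw [hval, mul_zero]
      · rw [hφ3 _ q.1 q.2.1 q.2.2 hj, mul_zero]
    rw [Finset.sum_eq_single p (fun q _ hq => hmain q hq)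
      (fun hp => absurd (Finset.mem_univ p) hp)]
    rw [hcol1 _ p.1 p.2 rfl (Prod.ext hc.2.1 rfl), mul_one]
    refine congrArg (fun r => r / hatZ pM A μ W b jstar x i0.succ) ?_
    refine Finset.sum_congr rfl fun m _ => ?_
    rw [hc.2.1, hatJointAt_succ A μ W b jstar hstat]
  · rw [if_neg hc]
    refine Finset.sum_eq_zero fun z _ => ?_
    rw [thetaV, dif_neg hc, zero_mul]
set_option maxHeartbeats 2000000 in
theorem stmt17 {𝕄 S X : Type*} {N : ℕ}
    [Fintype 𝕄] [Fintype S] [Fintype X] [DecidableEq 𝕄] [DecidableEq S]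
    (pM : (Fin N → 𝕄) → ℝ) (μ : Fin N × S → ℝ)
    (A : Matrix (Fin N × S) (Fin N × S) ℝ) (W : X → 𝕄 → Fin N × S → ℝ)
    (hpM0 : ∀ m, 0 ≤ pM m) (hpM1 : ∑ m, pM m = 1)
    (hμ0 : ∀ g, 0 ≤ μ g) (hμ1 : ∑ g, μ g = 1)
    (hA0 : ∀ g g', 0 ≤ A g' g) (hA1 : ∀ g, ∑ g', A g' g = 1)
    (hW0 : ∀ z m0 g, 0 ≤ W z m0 g) (hW1 : ∀ m0 g, ∑ z, W z m0 g = 1)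
    (b : 𝕄 → ℝ) (jstar : Fin N)
    -- relaxed multi-memory non-degeneracy with `𝕄* = supp(b)`, `H* = {j*} × S*`
    (Sstar : Finset S)
    (hli : LinearIndependent ℝ
      (fun p : {m0 : 𝕄 // b m0 ≠ 0} × {s : S // s ∈ Sstar} =>
        fun z : X => W z p.1.1 (jstar, p.2.1)))
    (hspan : Submodule.span ℝ
        {f : X → ℝ | ∃ m0 : 𝕄, ∃ s : S,
          b m0 ≠ 0 ∧ s ∈ Sstar ∧ f = fun z => W z m0 (jstar, s)}
      ⊓ Submodule.span ℝ
        {f : X → ℝ |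
          (∃ m0 : 𝕄, ∃ s : S,
            b m0 ≠ 0 ∧ s ∉ Sstar ∧ f = fun z => W z m0 (jstar, s))
          ∨ (∃ m0 : 𝕄, ∃ j : Fin N, ∃ s : S,
            j ≠ jstar ∧ f = fun z => W z m0 (j, s))}
      = ⊥)
    -- stationarity: ergodic chain, full support, `P(H_0) = A P(H_0)`
    (hErg : ∃ n₀ : ℕ, ∀ n ≥ n₀, ∀ g g' : Fin N × S, 0 < (A ^ n) g' g)
    (hfull : ∀ g, 0 < μ g)
    (hstat : A.mulVec μ = μ)
    (T : ℕ) :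
    ∃ (ΘV : Matrix (𝕄 × (Fin N × S)) X ℝ) (u : 𝕄 × (Fin N × S) → ℝ),
      ∀ x : Fin T → X,
        0 < mSeqP pM A μ W x →
        -- `Î(x)` is nonempty
        (∃ i0 : Fin T,
          (∀ s : S, s ∉ Sstar → ∑ j, mPostH pM A μ W x i0 (j, s) = 0)
          ∧ (∀ j : Fin N, j ≠ jstar → ∑ s, mPostH pM A μ W x i0 (j, s) = 0)) →
        (∀ i0 : Fin T,
          -- `i0.succ ∈ Î(x)`
          (∀ s : S, s ∉ Sstar → ∑ j, mPostH pM A μ W x i0 (j, s) = 0) →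
          (∀ j : Fin N, j ≠ jstar → ∑ s, mPostH pM A μ W x i0 (j, s) = 0) →
          -- (i)
          ((0 < hatZ pM A μ W b jstar x i0.succ →
            (∑ p : 𝕄 × (Fin N × S), u p *
                ((ΘV.mulVec (hatGtot pM A μ W b jstar x i0.succ)) p *
                  W (x i0) p.1 p.2))
              = ∑ m0, b m0 *
                  ((∑ m, if m jstar = m0 then pM m * hatSeqPm A μ W b jstar m x else 0)
                    / hatZ pM A μ W b jstar x i0.succ))
          -- (ii)
          ∧ ∃ r : ℝ, 0 < r ∧
              (∑ p : 𝕄 × (Fin N × S), u p *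
                  ((ΘV.mulVec (hatGtot pM A μ W b jstar x i0.succ)) p *
                    W (x i0) p.1 p.2))
                = r * ∑ m0, b m0 *
                    ((∑ m, if m jstar = m0 then pM m * mSeqPm A μ W m x else 0)
                      / mSeqP pM A μ W x)))
        -- furthermore: if `P(X̂ = x̂) = 0` the value is `0` at all `i > 1`
        ∧ (hatSeqP pM A μ W b jstar x = 0 →
            ∀ i0 : Fin T,
              (∑ p : 𝕄 × (Fin N × S), u p *
                  ((ΘV.mulVec (hatGtot pM A μ W b jstar x i0.succ)) p *
                    W (x i0) p.1 p.2)) = 0) := by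
  classical
  obtain ⟨φ, hφ1, hφ2, hφ3⟩ := exists_dual W b jstar Sstar hli hspan
  refine ⟨thetaV b jstar Sstar φ, fun p => b p.1, ?_⟩
  intro x hx _hne
  beta_reduce
  have hπnn : ∀ m, 0 ≤ promptV b jstar m := promptV_nonneg b jstar
  have hJnn : ∀ (m) (i0 : Fin T) (g), 0 ≤ mJointAt A μ W m x i0 g :=
    fun m i0 g => mJointAt_nonneg A μ W hμ0 hA0 hW0 m x i0 g
  have hmSnn : ∀ m, 0 ≤ mSeqPm A μ W m x := fun m => mSeqPm_nonneg A μ W hμ0 hA0 hW0 m x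
  have hmZpos : ∀ i0 : Fin T, 0 < mZ pM A μ W x i0 := by
    intro i0
    refine lt_of_lt_of_le hx ?_
    refine Finset.sum_le_sum fun m _ => ?_
    exact mul_le_mul_of_nonneg_left (mSeqPm_le A μ W hμ0 hA0 hW0 hW1 m x i0) (hpM0 m)
  have hhatSeqPm : ∀ m, hatSeqPm A μ W b jstar m x = promptV b jstar m * mSeqPm A μ W m x :=
    fun m => hatSeqPm_eq A μ W b jstar hstat m x
  have hhatZ : ∀ i0 : Fin T, hatZ pM A μ W b jstar x i0.succ
      = ∑ m, pM m * (promptV b jstar m * ∑ g, mJointAt A μ W m x i0 g) := by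
    intro i0
    refine Finset.sum_congr rfl fun m _ => ?_
    congr 1
    rw [Finset.mul_sum]
    exact Finset.sum_congr rfl fun g _ => hatJointAt_succ A μ W b jstar hstat m x i0 g
  have hhatZnn : ∀ i0 : Fin T, 0 ≤ hatZ pM A μ W b jstar x i0.succ := by
    intro i0
    rw [hhatZ i0]
    exact Finset.sum_nonneg fun m _ => mul_nonneg (hpM0 m)
      (mul_nonneg (hπnn m) (Finset.sum_nonneg fun g _ => hJnn m i0 g))
  -- reshaping of the `∑ m0`-indexed right-hand sides
  have hreshape : ∀ (t : (Fin N → 𝕄) → ℝ) (c : ℝ),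
      (∑ m0, b m0 * ((∑ m, if m jstar = m0 then t m else 0) / c))
        = (∑ m, b (m jstar) * t m) / c := by
    intro t c
    calc ∑ m0, b m0 * ((∑ m, if m jstar = m0 then t m else 0) / c)
        = ∑ m0, (∑ m, if m jstar = m0 then b m0 * t m else 0) / c := by
          refine Finset.sum_congr rfl fun m0 _ => ?_
          rw [show (∑ m, if m jstar = m0 then b m0 * t m else 0)
              = b m0 * ∑ m, if m jstar = m0 then t m else 0 by
            rw [Finset.mul_sum]
            exact Finset.sum_congr rfl fun m _ => by rw [mul_ite, mul_zero]]
          rw [mul_div_assoc]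
      _ = (∑ m0, ∑ m, if m jstar = m0 then b m0 * t m else 0) / c := by
          rw [Finset.sum_div]
      _ = (∑ m, b (m jstar) * t m) / c := by
          congr 1
          rw [Finset.sum_comm]
          refine Finset.sum_congr rfl fun m _ => ?_
          rw [Finset.sum_ite_eq]
          simp
  -- the main formula for the left-hand side when `hatZ > 0`
  have key : ∀ i0 : Fin T, 0 < hatZ pM A μ W b jstar x i0.succ →
      (∑ p : 𝕄 × (Fin N × S), b p.1 *
          ((thetaV b jstar Sstar φ).mulVec (hatGtot pM A μ W b jstar x i0.succ) p
            * W (x i0) p.1 p.2))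
        = (∑ m, pM m * (promptV b jstar m *
            ∑ g, if g.1 = jstar ∧ g.2 ∈ Sstar then
              b (m jstar) * (mJointAt A μ W m x i0 g * W (x i0) (m jstar) g) else 0))
          / hatZ pM A μ W b jstar x i0.succ := by
    intro i0 hZ
    have hZne : hatZ pM A μ W b jstar x i0.succ ≠ 0 := ne_of_gt hZ
    calc ∑ p : 𝕄 × (Fin N × S), b p.1 *
          ((thetaV b jstar Sstar φ).mulVec (hatGtot pM A μ W b jstar x i0.succ) p
            * W (x i0) p.1 p.2)
        = ∑ p : 𝕄 × (Fin N × S), (if p.2.1 = jstar ∧ p.2.2 ∈ Sstar then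
            b p.1 * (∑ m, if m jstar = p.1 then
              pM m * (promptV b jstar m * mJointAt A μ W m x i0 p.2) else 0)
              * W (x i0) p.1 p.2 else 0) / hatZ pM A μ W b jstar x i0.succ := by
          refine Finset.sum_congr rfl fun p _ => ?_
          rw [thetaV_mulVec pM A μ W b jstar Sstar φ hφ1 hφ2 hφ3 hstat x i0 hZ p]
          by_cases hb : b p.1 = 0
          · by_cases hss : p.2.1 = jstar ∧ p.2.2 ∈ Sstar
            · rw [if_neg (fun hcc => hcc.1 hb), if_pos hss, hb]
              simp
            · rw [if_neg (fun hcc => hss hcc.2), if_neg hss]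
              simp
          · by_cases hss : p.2.1 = jstar ∧ p.2.2 ∈ Sstar
            · rw [if_pos (⟨hb, hss.1, hss.2⟩ :
                b p.1 ≠ 0 ∧ p.2.1 = jstar ∧ p.2.2 ∈ Sstar), if_pos hss]
              field_simp
            · rw [if_neg (fun hcc => hss ⟨hcc.2.1, hcc.2.2⟩), if_neg hss]
              simp
      _ = (∑ p : 𝕄 × (Fin N × S), if p.2.1 = jstar ∧ p.2.2 ∈ Sstar then
            b p.1 * (∑ m, if m jstar = p.1 then
              pM m * (promptV b jstar m * mJointAt A μ W m x i0 p.2) else 0)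
              * W (x i0) p.1 p.2 else 0) / hatZ pM A μ W b jstar x i0.succ := by
          rw [Finset.sum_div]
      _ = _ := by
          congr 1
          rw [Fintype.sum_prod_type, Finset.sum_comm]
          have hrhs : (∑ m, pM m * (promptV b jstar m *
              ∑ g, if g.1 = jstar ∧ g.2 ∈ Sstar then
                b (m jstar) * (mJointAt A μ W m x i0 g * W (x i0) (m jstar) g) else 0))
              = ∑ g, ∑ m, (if g.1 = jstar ∧ g.2 ∈ Sstar then
                  pM m * (promptV b jstar m * (b (m jstar) *
                    (mJointAt A μ W m x i0 g * W (x i0) (m jstar) g))) else 0) := by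
            rw [Finset.sum_comm]
            refine Finset.sum_congr rfl fun m _ => ?_
            rw [Finset.mul_sum, Finset.mul_sum]
            refine Finset.sum_congr rfl fun g _ => ?_
            by_cases hg : g.1 = jstar ∧ g.2 ∈ Sstar
            · rw [if_pos hg, if_pos hg]
            · rw [if_neg hg, if_neg hg, mul_zero, mul_zero]
          rw [hrhs]
          refine Finset.sum_congr rfl fun g _ => ?_
          by_cases hg : g.1 = jstar ∧ g.2 ∈ Sstar
          · calc (∑ m0, if (m0, g).2.1 = jstar ∧ (m0, g).2.2 ∈ Sstar then
                  b (m0, g).1 * (∑ m, if m jstar = (m0, g).1 then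
                    pM m * (promptV b jstar m * mJointAt A μ W m x i0 (m0, g).2) else 0)
                    * W (x i0) (m0, g).1 (m0, g).2 else 0)
                = ∑ m0, ∑ m, (if m jstar = m0 then
                    b m0 * (pM m * (promptV b jstar m * mJointAt A μ W m x i0 g))
                      * W (x i0) m0 g else 0) := by
                  refine Finset.sum_congr rfl fun m0 _ => ?_
                  rw [if_pos hg, Finset.mul_sum, Finset.sum_mul]
                  refine Finset.sum_congr rfl fun m _ => ?_
                  rw [mul_ite, mul_zero, ite_mul, zero_mul]
              _ = ∑ m, b (m jstar) * (pM m * (promptV b jstar m * mJointAt A μ W m x i0 g))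
                    * W (x i0) (m jstar) g := by
                  rw [Finset.sum_comm]
                  refine Finset.sum_congr rfl fun m _ => ?_
                  rw [Finset.sum_ite_eq]
                  simp
              _ = ∑ m, (if g.1 = jstar ∧ g.2 ∈ Sstar then
                    pM m * (promptV b jstar m * (b (m jstar) *
                      (mJointAt A μ W m x i0 g * W (x i0) (m jstar) g))) else 0) := by
                  refine Finset.sum_congr rfl fun m _ => ?_
                  rw [if_pos hg]
                  ring
          · rw [Finset.sum_eq_zero fun m0 _ => if_neg hg,
                Finset.sum_eq_zero fun m _ => if_neg hg]
  -- the left-hand side vanishes when `hatZ = 0`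
  have hlhs0 : ∀ i0 : Fin T, ¬ 0 < hatZ pM A μ W b jstar x i0.succ →
      (∑ p : 𝕄 × (Fin N × S), b p.1 *
          ((thetaV b jstar Sstar φ).mulVec (hatGtot pM A μ W b jstar x i0.succ) p
            * W (x i0) p.1 p.2)) = 0 := by
    intro i0 hZ
    have h0 : hatGtot pM A μ W b jstar x i0.succ = fun _ => 0 := funext fun z => if_neg hZ
    rw [h0]
    refine Finset.sum_eq_zero fun p _ => ?_
    have : (thetaV b jstar Sstar φ).mulVec (fun _ => (0:ℝ)) p = 0 := by
      show ∑ z, thetaV b jstar Sstar φ p z * 0 = 0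
      simp
    rw [this, zero_mul, mul_zero]
  -- `numP = 0` when `hatZ = 0`
  have hnumP0 : ∀ i0 : Fin T, ¬ 0 < hatZ pM A μ W b jstar x i0.succ →
      (∑ m, b (m jstar) * (pM m * mSeqPm A μ W m x)) = 0 := by
    intro i0 hZ
    have hZ0 : hatZ pM A μ W b jstar x i0.succ = 0 :=
      le_antisymm (not_lt.mp hZ) (hhatZnn i0)
    have h1 : (∑ m, pM m * (promptV b jstar m * ∑ g, mJointAt A μ W m x i0 g)) = 0 := by
      rw [← hhatZ i0]
      exact hZ0
    have hterm : ∀ m, pM m * (promptV b jstar m * ∑ g, mJointAt A μ W m x i0 g) = 0 :=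
      fun m => (Finset.sum_eq_zero_iff_of_nonneg (fun m _ => mul_nonneg (hpM0 m)
        (mul_nonneg (hπnn m) (Finset.sum_nonneg fun g _ => hJnn m i0 g)))).mp
          h1 m (Finset.mem_univ m)
    refine Finset.sum_eq_zero fun m _ => ?_
    by_cases hb : b (m jstar) = 0
    · rw [hb, zero_mul]
    · have hπ : promptV b jstar m = 1 := by
        unfold promptV
        rw [if_pos hb]
      have h2 : pM m * ∑ g, mJointAt A μ W m x i0 g = 0 := by
        have := hterm m
        rw [hπ, one_mul] at this
        exact this
      have h3 : pM m * mSeqPm A μ W m x = 0 := by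
        refine le_antisymm ?_ (mul_nonneg (hpM0 m) (hmSnn m))
        calc pM m * mSeqPm A μ W m x
            ≤ pM m * ∑ g, mJointAt A μ W m x i0 g :=
              mul_le_mul_of_nonneg_left (mSeqPm_le A μ W hμ0 hA0 hW0 hW1 m x i0) (hpM0 m)
          _ = 0 := h2
      rw [h3, mul_zero]
  refine ⟨?_, ?_⟩
  · -- positions in `Î(x)`
    intro i0 hS hJ
    -- the killing property from the posterior-support conditions
    have hkillS : ∀ s : S, s ∉ Sstar → ∀ (j : Fin N) (m : Fin N → 𝕄),
        pM m * mJointAt A μ W m x i0 (j, s) = 0 := by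
      intro s hs j m
      have hsum := hS s hs
      unfold mPostH at hsum
      rw [← Finset.sum_div] at hsum
      have h1 : (∑ j, ∑ m, pM m * mJointAt A μ W m x i0 (j, s)) = 0 := by
        rcases div_eq_zero_iff.mp hsum with h | h
        · exact h
        · exact absurd h (ne_of_gt (hmZpos i0))
      have h2 := (Finset.sum_eq_zero_iff_of_nonneg (fun j _ => Finset.sum_nonneg
        fun m _ => mul_nonneg (hpM0 m) (hJnn m i0 _))).mp h1 j (Finset.mem_univ j)
      exact (Finset.sum_eq_zero_iff_of_nonneg (fun m _ => mul_nonneg (hpM0 m)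
        (hJnn m i0 _))).mp h2 m (Finset.mem_univ m)
    have hkillJ : ∀ j : Fin N, j ≠ jstar → ∀ (s : S) (m : Fin N → 𝕄),
        pM m * mJointAt A μ W m x i0 (j, s) = 0 := by
      intro j hj s m
      have hsum := hJ j hj
      unfold mPostH at hsum
      rw [← Finset.sum_div] at hsum
      have h1 : (∑ s, ∑ m, pM m * mJointAt A μ W m x i0 (j, s)) = 0 := by
        rcases div_eq_zero_iff.mp hsum with h | h
        · exact h
        · exact absurd h (ne_of_gt (hmZpos i0))
      have h2 := (Finset.sum_eq_zero_iff_of_nonneg (fun s _ => Finset.sum_nonneg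
        fun m _ => mul_nonneg (hpM0 m) (hJnn m i0 _))).mp h1 s (Finset.mem_univ s)
      exact (Finset.sum_eq_zero_iff_of_nonneg (fun m _ => mul_nonneg (hpM0 m)
        (hJnn m i0 _))).mp h2 m (Finset.mem_univ m)
    have hkill : ∀ g : Fin N × S, ¬(g.1 = jstar ∧ g.2 ∈ Sstar) →
        ∀ m : Fin N → 𝕄, pM m * mJointAt A μ W m x i0 g = 0 := by
      intro g hg m
      rcases not_and_or.mp hg with h | h
      · have := hkillJ g.1 h g.2 m
        simpa using this
      · have := hkillS g.2 h g.1 m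
        simpa using this
    -- the numerator equals `numP` on `Î(x)`
    have hnumLP : (∑ m, pM m * (promptV b jstar m *
          ∑ g, if g.1 = jstar ∧ g.2 ∈ Sstar then
            b (m jstar) * (mJointAt A μ W m x i0 g * W (x i0) (m jstar) g) else 0))
        = ∑ m, b (m jstar) * (pM m * mSeqPm A μ W m x) := by
      refine Finset.sum_congr rfl fun m _ => ?_
      rw [mSeqPm_eq A μ W m x i0]
      simp only [Finset.mul_sum]
      refine Finset.sum_congr rfl fun g _ => ?_
      by_cases hg : g.1 = jstar ∧ g.2 ∈ Sstar
      · rw [if_pos hg]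
        have hmg : m g.1 = m jstar := by rw [hg.1]
        rw [← hmg]
        have hbπ := promptV_mul_b b jstar m
        rw [← hmg] at hbπ
        linear_combination (pM m * (mJointAt A μ W m x i0 g * W (x i0) (m g.1) g)) * hbπ
      · rw [if_neg hg, mul_zero, mul_zero]
        linear_combination (-(b (m jstar) * W (x i0) (m g.1) g)) * hkill g hg m
    constructor
    · -- part (i)
      intro hZ
      rw [key i0 hZ, hnumLP,
        hreshape (fun m => pM m * hatSeqPm A μ W b jstar m x)
          (hatZ pM A μ W b jstar x i0.succ)]
      congr 1
      refine (Finset.sum_congr rfl fun m _ => ?_).symm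
      rw [hhatSeqPm m]
      linear_combination (pM m * mSeqPm A μ W m x) * promptV_mul_b b jstar m
    · -- part (ii)
      by_cases hZ : 0 < hatZ pM A μ W b jstar x i0.succ
      · refine ⟨mSeqP pM A μ W x / hatZ pM A μ W b jstar x i0.succ, div_pos hx hZ, ?_⟩
        rw [key i0 hZ, hnumLP,
          hreshape (fun m => pM m * mSeqPm A μ W m x) (mSeqP pM A μ W x)]
        have hZne : hatZ pM A μ W b jstar x i0.succ ≠ 0 := ne_of_gt hZ
        have hxne : mSeqP pM A μ W x ≠ 0 := ne_of_gt hx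
        field_simp
      · refine ⟨1, one_pos, ?_⟩
        rw [hlhs0 i0 hZ,
          hreshape (fun m => pM m * mSeqPm A μ W m x) (mSeqP pM A μ W x),
          hnumP0 i0 hZ, zero_div, mul_zero]
  · -- furthermore: `P(X̂ = x̂) = 0`
    intro h0 i0
    by_cases hZ : 0 < hatZ pM A μ W b jstar x i0.succ
    · rw [key i0 hZ]
      have h1 : (∑ m, pM m * (promptV b jstar m * mSeqPm A μ W m x)) = 0 := by
        have he : hatSeqP pM A μ W b jstar x
            = ∑ m, pM m * (promptV b jstar m * mSeqPm A μ W m x) :=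
          Finset.sum_congr rfl fun m _ => by rw [hhatSeqPm m]
        rw [← he]
        exact h0
      have hterm : ∀ m, pM m * (promptV b jstar m * mSeqPm A μ W m x) = 0 :=
        fun m => (Finset.sum_eq_zero_iff_of_nonneg (fun m _ => mul_nonneg (hpM0 m)
          (mul_nonneg (hπnn m) (hmSnn m)))).mp h1 m (Finset.mem_univ m)
      have hgterm : ∀ (m : Fin N → 𝕄) (g : Fin N × S),
          pM m * (promptV b jstar m * (mJointAt A μ W m x i0 g * W (x i0) (m g.1) g)) = 0 := by
        intro m g
        have h2 := hterm m
        rw [mSeqPm_eq A μ W m x i0] at h2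
        simp only [Finset.mul_sum] at h2
        exact (Finset.sum_eq_zero_iff_of_nonneg (fun g _ => mul_nonneg (hpM0 m)
          (mul_nonneg (hπnn m) (mul_nonneg (hJnn m i0 g) (hW0 _ _ _))))).mp
            h2 g (Finset.mem_univ g)
      have hnum0 : (∑ m, pM m * (promptV b jstar m *
            ∑ g, if g.1 = jstar ∧ g.2 ∈ Sstar then
              b (m jstar) * (mJointAt A μ W m x i0 g * W (x i0) (m jstar) g) else 0)) = 0 := by
        refine Finset.sum_eq_zero fun m _ => ?_
        simp only [Finset.mul_sum]
        refine Finset.sum_eq_zero fun g _ => ?_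
        by_cases hg : g.1 = jstar ∧ g.2 ∈ Sstar
        · rw [if_pos hg]
          have hmg : m g.1 = m jstar := by rw [hg.1]
          have h2 := hgterm m g
          rw [hmg] at h2
          linear_combination (b (m jstar)) * h2
        · rw [if_neg hg, mul_zero, mul_zero]
      rw [hnum0, zero_div]
    · exact hlhs0 i0 hZ

end
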